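/- For every n ≥ 1, six cops suffice to catch the robber in the entanglement game on the graph DGₙ. -/

import Mathlib

/-- One legal move of the cops when the robber stands on `r`: either all cops stay put,
or one cop (possibly coming from off the graph, i.e. from `none`) flies to `r`. -/
def CopMove {V : Type*} {k : ℕ} (r : V) (f f' : Fin k → Option V) : Prop :=
  f' = f ∨ ∃ i : Fin k, f' = Function.update f i (some r)

/-- The cops can force a catch from the position where the cops are placed according to
`f` (a cop with value `none` is off the graph) and the robber stands on `r`.  After the
cop move `f'`, the robber must move to an unoccupied neighbour; if he has no such
neighbour the cops have won (the inner quantification is vacuous). -/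
inductive CopsWin {V : Type*} (G : SimpleGraph V) (k : ℕ) :
    (Fin k → Option V) → V → Prop where
  | step : ∀ (f : Fin k → Option V) (r : V) (f' : Fin k → Option V),
      CopMove r f f' →
      (∀ u : V, G.Adj r u → (∀ i, f' i ≠ some u) → CopsWin G k f' u) →
      CopsWin G k f r

/-- `k` cops suffice to catch the robber on `G`: wherever the robber chooses to start,
the cops (starting off the graph) can catch him. -/
def CopsCatch {V : Type*} (G : SimpleGraph V) (k : ℕ) : Prop :=
  ∀ r : V, CopsWin G k (fun _ => none) r

/-- The graph `DGₙ` on vertex set `ℤ/(2n)ℤ`: a Hamilton cycle (edges `{i, i+1}`)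
together with all diagonal edges `{i, i+n}` joining every vertex to its antipode. -/
def DG (n : ℕ) : SimpleGraph (ZMod (2 * n)) :=
  SimpleGraph.fromRel (fun i j => j = i + 1 ∨ j = i + (n : ZMod (2 * n)))

/-! ### auxiliary machinery -/

lemma nn_zero (n : ℕ) : (n : ZMod (2*n)) + n = 0 := by
  have h : ((2*n : ℕ) : ZMod (2*n)) = 0 := ZMod.natCast_self _
  push_cast [two_mul] at h
  exact h

lemma DG_adj {n : ℕ} {x y : ZMod (2*n)} (h : (DG n).Adj x y) :
    y = x + 1 ∨ x = y + 1 ∨ y = x + (n : ZMod (2*n)) := by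
  rw [DG, SimpleGraph.fromRel_adj] at h
  obtain ⟨-, h⟩ := h
  rcases h with (h | h) | (h | h)
  · exact Or.inl h
  · right; right; exact h
  · exact Or.inr (Or.inl h)
  · right; right; rw [h, add_assoc, nn_zero, add_zero]

lemma adj_cases0 {n : ℕ} {v u : ZMod (2*n)} (h : (DG n).Adj v u) :
    u = v + 1 ∨ u = v - 1 ∨ u = v + (n : ZMod (2*n)) := by
  rcases DG_adj h with h | h | h
  · exact Or.inl h
  · exact Or.inr (Or.inl (eq_sub_of_add_eq h.symm))
  · exact Or.inr (Or.inr h)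

lemma adj_cases {n : ℕ} {a s : ZMod (2*n)} {j : ℕ} {u : ZMod (2*n)}
    (hs : s = 1 ∨ s = -1) (hj : 1 ≤ j)
    (h : (DG n).Adj (a + s * (j : ZMod (2*n))) u) :
    u = a + s * ((j+1 : ℕ) : ZMod (2*n)) ∨ u = a + s * ((j-1 : ℕ) : ZMod (2*n)) ∨
      u = a + s * ((j+n : ℕ) : ZMod (2*n)) := by
  have hnn := nn_zero n
  have hj1 : ((j-1:ℕ) : ZMod (2*n)) = (j : ZMod (2*n)) - 1 := by
    rw [Nat.cast_sub hj, Nat.cast_one]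
  rcases adj_cases0 h with h | h | h <;> rcases hs with rfl | rfl
  · left; rw [h]; push_cast; ring
  · right; left; rw [h, hj1]; ring
  · right; left; rw [h, hj1]; ring
  · left; rw [h]; push_cast; ring
  · right; right; rw [h]; push_cast; ring
  · right; right; rw [h]; push_cast; linear_combination hnn

def cov {V : Type*} (f : Fin 6 → Option V) (L : List V) : Prop := ∀ v ∈ L, ∃ i, f i = some v

lemma exists_spare {V : Type*} (f : Fin 6 → Option V) (L : List V) (h5 : L.length ≤ 5)
    (hc : cov f L) : ∃ i : Fin 6, ∀ v ∈ L, ∃ j, j ≠ i ∧ f j = some v := by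
  classical
  set g : V → Fin 6 := fun v => if h : ∃ i, f i = some v then h.choose else 0 with hg
  have hgood : ∀ v ∈ L, f (g v) = some v := by
    intro v hv
    obtain ⟨i, hi⟩ := hc v hv
    have he : ∃ i, f i = some v := ⟨i, hi⟩
    simp only [hg, dif_pos he]
    exact he.choose_spec
  obtain ⟨i, hi⟩ : ∃ i, i ∉ L.toFinset.image g := by
    by_contra h
    push_neg at h
    have hsub : (Finset.univ : Finset (Fin 6)) ⊆ L.toFinset.image g := fun x _ => h x
    have hcard : (L.toFinset.image g).card ≤ 5 :=
      le_trans Finset.card_image_le (le_trans L.toFinset_card_le h5)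
    have := Finset.card_le_card hsub
    simp at this
    omega
  refine ⟨i, fun v hv => ⟨g v, fun h => hi ?_, hgood v hv⟩⟩
  rw [← h]
  exact Finset.mem_image_of_mem g (by simpa using hv)

lemma cov_update {V : Type*} (f : Fin 6 → Option V) (i : Fin 6) (r : V) (L : List V)
    (h : ∀ v ∈ L, ∃ j, j ≠ i ∧ f j = some v) :
    cov (Function.update f i (some r)) (r :: L) := by
  intro v hv
  rcases List.mem_cons.1 hv with rfl | hv
  · exact ⟨i, Function.update_self i (some v) f⟩
  · obtain ⟨j, hj, hfj⟩ := h v hv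
    exact ⟨j, by rw [Function.update_of_ne hj]; exact hfj⟩

lemma covElt {V : Type*} {f' : Fin 6 → Option V} {L : List V} (hc : cov f' L) {w v : V}
    (hvw : v = w) (hw : w ∈ L) : ∃ i, f' i = some v := hvw ▸ hc w hw

lemma noCopF {V : Type*} {f' : Fin 6 → Option V} {u w : V} (hfree : ∀ i, f' i ≠ some u)
    (hc : ∃ i, f' i = some w) (huw : u = w) : False := by
  subst huw
  obtain ⟨i, hi⟩ := hc
  exact hfree i hi

lemma flyStep {V : Type*} {G : SimpleGraph V} {f : Fin 6 → Option V} {r : V} (i : Fin 6)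
    (h : ∀ u : V, G.Adj r u → (∀ j, Function.update f i (some r) j ≠ some u) →
      CopsWin G 6 (Function.update f i (some r)) u) : CopsWin G 6 f r :=
  CopsWin.step f r _ (Or.inr ⟨i, rfl⟩) h

/-- measure arithmetic -/
lemma meas1 (n m j μ : ℕ) (hj : 1 ≤ j) (hjm : j + 1 < m) (hmn : m ≤ n)
    (H : 2*n*m < μ + 1) : 2*n*(m - j) + (m - j - 1) + 1 < μ := by
  have h1 : 2*n*(m-j) + 2*n*j = 2*n*m := by
    rw [← Nat.mul_add, Nat.sub_add_cancel (by omega)]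
  have h2 : 2*n*1 ≤ 2*n*j := Nat.mul_le_mul_left _ hj
  rw [Nat.mul_one] at h2
  have h3 : m - j - 1 + 1 = m - j := by omega
  have h4 : m - j ≤ n := by omega
  have h5 : 1 ≤ n := by omega
  linarith

lemma meas2 (n m j μ : ℕ) (hj : 2 ≤ j) (hjm : j < m) (hmn : m ≤ n)
    (H : 2*n*m < μ + 1) : 2*n*j + (j - 1) + 1 < μ := by
  have h1 : 2*n*j + 2*n*(m-j) = 2*n*m := by
    rw [← Nat.mul_add, Nat.add_sub_cancel' (by omega)]
  have h2 : 2*n*1 ≤ 2*n*(m-j) := Nat.mul_le_mul_left _ (by omega)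
  rw [Nat.mul_one] at h2
  have h3 : j - 1 + 1 = j := by omega
  have h4 : j ≤ n := by omega
  have h5 : 1 ≤ n := by omega
  linarith

/-- The invariant of the cop strategy. -/
def Good (n μ : ℕ) (f : Fin 6 → Option (ZMod (2*n))) (r : ZMod (2*n)) : Prop :=
  -- R : two walls at rungs 0 and m (base a, sign s), robber at j, prev cop at j-1
  (∃ m j : ℕ, ∃ a s : ZMod (2*n), (s = 1 ∨ s = -1) ∧ 2 ≤ m ∧ m ≤ n ∧ 1 ≤ j ∧ j < m ∧
     2*n*m + (m - j) + 1 < μ ∧ r = a + s * (j : ZMod (2*n)) ∧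
     cov f [a, a + s * ((n : ℕ) : ZMod (2*n)), a + s * ((m : ℕ) : ZMod (2*n)),
            a + s * ((m+n : ℕ) : ZMod (2*n)), a + s * ((j-1 : ℕ) : ZMod (2*n))])
  ∨
  -- D : robber took the diagonal at rung j
  (∃ m j : ℕ, ∃ a s : ZMod (2*n), (s = 1 ∨ s = -1) ∧ 2 ≤ m ∧ m ≤ n ∧ 1 ≤ j ∧ j < m ∧
     2*n*m < μ ∧ r = a + s * ((j+n : ℕ) : ZMod (2*n)) ∧
     cov f [a, a + s * ((n : ℕ) : ZMod (2*n)), a + s * ((m : ℕ) : ZMod (2*n)),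
            a + s * ((m+n : ℕ) : ZMod (2*n)), a + s * ((j : ℕ) : ZMod (2*n))])
  ∨
  -- W : robber stands on a wall vertex whose partner is guarded
  (2*n*n + n + 2 < μ ∧ cov f [r + ((n:ℕ) : ZMod (2*n))])
  ∨
  -- P : initial run, no wall yet
  (∃ t : ℕ, ∃ a s : ZMod (2*n), (s = 1 ∨ s = -1) ∧ 1 ≤ t ∧ t ≤ n - 1 ∧
     2*n*n + n + 3 + (n - t) < μ ∧ r = a + s * ((t : ℕ) : ZMod (2*n)) ∧
     cov f [a, a + s * ((t-1 : ℕ) : ZMod (2*n))])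
  ∨
  -- S0 : start of the game
  (2*n*n + 2*n + 4 < μ)

lemma good_win {n : ℕ} (hn : 2 ≤ n) :
    ∀ μ (f : Fin 6 → Option (ZMod (2*n))) (r : ZMod (2*n)),
      Good n μ f r → CopsWin (DG n) 6 f r := by
  intro μ
  induction μ with
  | zero =>
    intro f r hg
    exfalso
    rcases hg with ⟨m,j,a,s,-,-,-,-,-,h,-,-⟩ | ⟨m,j,a,s,-,-,-,-,-,h,-,-⟩ | ⟨h,-⟩ |
      ⟨t,a,s,-,-,-,h,-,-⟩ | h <;> omega
  | succ μ ih =>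
    intro f r hg
    have hnn := nn_zero n
    rcases hg with hR | hD | hW | hP | hS
    -- ================== case R ==================
    · obtain ⟨m, j, a, s, hs, hm2, hmn, hj1, hjm, hμ, hr, hcov⟩ := hR
      obtain ⟨i, hsp⟩ := exists_spare f _ (by simp) hcov
      subst hr
      have hc' := cov_update f i (a + s * (j : ZMod (2*n))) _ hsp
      refine flyStep i ?_
      intro u hadj hfree
      rcases adj_cases hs hj1 hadj with hu | hu | hu
      · -- u = φ(j+1)
        rcases Nat.lt_or_ge (j+1) m with hlt | hge
        · refine ih _ u (Or.inl ⟨m, j+1, a, s, hs, hm2, hmn, by omega, hlt, ?_, hu, ?_⟩)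
          · have h1 : m - (j+1) < m - j := by omega
            linarith
          · intro v hv
            simp only [List.mem_cons, List.not_mem_nil, or_false] at hv
            rcases hv with rfl | rfl | rfl | rfl | rfl
            · exact covElt hc' rfl (by simp)
            · exact covElt hc' rfl (by simp)
            · exact covElt hc' rfl (by simp)
            · exact covElt hc' rfl (by simp)
            · exact covElt hc' (by norm_num) List.mem_cons_self
        · -- j+1 = m : blocked
          exact absurd (covElt hc' (by rw [hu, show j + 1 = m by omega])
                (show a + s * ((m:ℕ) : ZMod (2*n)) ∈ _ by simp)) (fun ⟨i2, hi2⟩ => hfree i2 hi2)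
      · -- u = φ(j-1) : blocked
        exact absurd (covElt hc' hu
                (show a + s * ((j-1:ℕ) : ZMod (2*n)) ∈ _ by simp))
          (fun ⟨i2, hi2⟩ => hfree i2 hi2)
      · -- u = φ(j+n) : go to state D
        refine ih _ u (Or.inr (Or.inl ⟨m, j, a, s, hs, hm2, hmn, hj1, hjm, by linarith, hu, ?_⟩))
        intro v hv
        simp only [List.mem_cons, List.not_mem_nil, or_false] at hv
        rcases hv with rfl | rfl | rfl | rfl | rfl <;> exact covElt hc' rfl (by simp)
    -- ================== case D ==================
    · obtain ⟨m, j, a, s, hs, hm2, hmn, hj1, hjm, hμ, hr, hcov⟩ := hD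
      obtain ⟨i, hsp⟩ := exists_spare f _ (by simp) hcov
      subst hr
      have hc' := cov_update f i (a + s * ((j+n : ℕ) : ZMod (2*n))) _ hsp
      refine flyStep i ?_
      intro u hadj hfree
      rcases adj_cases hs (show 1 ≤ j + n by omega) hadj with hu | hu | hu
      · -- u = φ(j+n+1)
        rcases Nat.lt_or_ge (j+1) m with hlt | hge
        · -- new R state R(m-j, 1) with base b = a + s*(j+n), sign s
          refine ih _ u (Or.inl ⟨m - j, 1, a + s * ((j+n : ℕ) : ZMod (2*n)), s, hs,
            by omega, by omega, le_refl 1, by omega, meas1 n m j μ hj1 hlt hmn hμ, ?_, ?_⟩)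
          · rw [hu]; push_cast; ring
          · intro v hv
            simp only [List.mem_cons, List.not_mem_nil, or_false] at hv
            rcases hv with rfl | rfl | rfl | rfl | rfl
            · exact covElt hc' rfl (by simp)
            · exact covElt hc' (by push_cast; linear_combination s * hnn)
                (show a + s * ((j:ℕ) : ZMod (2*n)) ∈ _ by simp)
            · exact covElt hc' (by rw [Nat.cast_sub (by omega : j ≤ m)]; push_cast; ring)
                (show a + s * ((m+n:ℕ) : ZMod (2*n)) ∈ _ by simp)
            · exact covElt hc' (by
                rw [show m - j + n = (m + n) - j from by omega,
                  Nat.cast_sub (by omega : j ≤ m + n)]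
                push_cast; linear_combination s * hnn)
                (show a + s * ((m:ℕ) : ZMod (2*n)) ∈ _ by simp)
            · exact covElt hc' (by norm_num)
                (show a + s * ((j+n:ℕ) : ZMod (2*n)) ∈ _ by simp)
        · -- j+1 = m : u = φ(m+n), blocked
          refine absurd (covElt hc' (by rw [hu, show j + n + 1 = m + n by omega])
                (show a + s * ((m+n:ℕ) : ZMod (2*n)) ∈ _ by simp)) (fun ⟨i2, hi2⟩ => hfree i2 hi2)
      · -- u = φ(j+n-1)
        rcases Nat.lt_or_ge 1 j with hlt | hge
        · -- new R state R(j, 1) with base b = a + s*(j+n), sign -s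
          refine ih _ u (Or.inl ⟨j, 1, a + s * ((j+n : ℕ) : ZMod (2*n)), -s,
            (by rcases hs with rfl | rfl; exacts [Or.inr rfl, Or.inl (by norm_num)]),
            hlt, by omega, le_refl 1, hlt, meas2 n m j μ hlt hjm hmn hμ, ?_, ?_⟩)
          · rw [hu, Nat.cast_sub (by omega : 1 ≤ j + n)]; push_cast; ring
          · intro v hv
            simp only [List.mem_cons, List.not_mem_nil, or_false] at hv
            rcases hv with rfl | rfl | rfl | rfl | rfl
            · exact covElt hc' rfl (by simp)
            · exact covElt hc' (by push_cast; ring)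
                (show a + s * ((j:ℕ) : ZMod (2*n)) ∈ _ by simp)
            · exact covElt hc' (by push_cast; ring)
                (show a + s * ((n:ℕ) : ZMod (2*n)) ∈ _ by simp)
            · exact covElt hc' (by push_cast; ring)
                (show a ∈ _ by simp)
            · exact covElt hc' (by norm_num)
                (show a + s * ((j+n:ℕ) : ZMod (2*n)) ∈ _ by simp)
        · -- j = 1 : u = φ(n), blocked
          refine absurd (covElt hc' (by rw [hu, show j + n - 1 = n by omega])
                (show a + s * ((n:ℕ) : ZMod (2*n)) ∈ _ by simp)) (fun ⟨i2, hi2⟩ => hfree i2 hi2)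
      · -- u = φ(j+2n) = φ(j) : blocked
        refine absurd (covElt hc' (by rw [hu]; push_cast; linear_combination s * hnn)
                (show a + s * ((j:ℕ) : ZMod (2*n)) ∈ _ by simp)) (fun ⟨i2, hi2⟩ => hfree i2 hi2)
    -- ================== case W ==================
    · obtain ⟨hμ, hcov⟩ := hW
      obtain ⟨i, hsp⟩ := exists_spare f _ (by simp) hcov
      have hc' := cov_update f i r _ hsp
      refine flyStep i ?_
      intro u hadj hfree
      have hmeas : 2*n*n + ((n:ℕ) - 1) + 1 < μ := by
        have h1 : n - 1 + 1 = n := by omega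
        linarith
      rcases adj_cases0 hadj with hu | hu | hu
      · refine ih _ u (Or.inl ⟨n, 1, r, 1, Or.inl rfl, hn, le_refl n, le_refl 1, hn, hmeas,
          by rw [hu]; push_cast; ring, ?_⟩)
        intro v hv
        simp only [List.mem_cons, List.not_mem_nil, or_false] at hv
        rcases hv with rfl | rfl | rfl | rfl | rfl
        · exact covElt hc' rfl (by simp)
        · exact covElt hc' (by ring)
                (show r + ((n:ℕ) : ZMod (2*n)) ∈ _ by simp)
        · exact covElt hc' (by ring)
                (show r + ((n:ℕ) : ZMod (2*n)) ∈ _ by simp)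
        · exact covElt hc' (by push_cast; linear_combination hnn)
                (show r ∈ _ by simp)
        · exact covElt hc' (by norm_num)
                (show r ∈ _ by simp)
      · refine ih _ u (Or.inl ⟨n, 1, r, -1, Or.inr rfl, hn, le_refl n, le_refl 1, hn, hmeas,
          by rw [hu]; push_cast; ring, ?_⟩)
        intro v hv
        simp only [List.mem_cons, List.not_mem_nil, or_false] at hv
        rcases hv with rfl | rfl | rfl | rfl | rfl
        · exact covElt hc' rfl (by simp)
        · exact covElt hc' (by push_cast; linear_combination - hnn)
                (show r + ((n:ℕ) : ZMod (2*n)) ∈ _ by simp)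
        · exact covElt hc' (by push_cast; linear_combination - hnn)
                (show r + ((n:ℕ) : ZMod (2*n)) ∈ _ by simp)
        · exact covElt hc' (by push_cast; linear_combination - hnn)
                (show r ∈ _ by simp)
        · exact covElt hc' (by norm_num)
                (show r ∈ _ by simp)
      · exact absurd (covElt hc' hu
                (show r + ((n:ℕ) : ZMod (2*n)) ∈ _ by simp))
          (fun ⟨i2, hi2⟩ => hfree i2 hi2)
    -- ================== case P ==================
    · obtain ⟨t, a, s, hs, ht1, htn, hμ, hr, hcov⟩ := hP
      obtain ⟨i, hsp⟩ := exists_spare f _ (by simp) hcov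
      subst hr
      have hc' := cov_update f i (a + s * ((t : ℕ) : ZMod (2*n))) _ hsp
      refine flyStep i ?_
      intro u hadj hfree
      have hmeasW : 2*n*n + n + 2 < μ := by linarith
      rcases adj_cases hs ht1 hadj with hu | hu | hu
      · rcases Nat.lt_or_ge (t+1) n with hlt | hge
        · -- continue the run
          refine ih _ u (Or.inr (Or.inr (Or.inr (Or.inl ⟨t+1, a, s, hs, by omega, by omega,
            ?_, hu, ?_⟩))))
          · have h1 : n - (t+1) < n - t := by omega
            linarith
          · intro v hv
            simp only [List.mem_cons, List.not_mem_nil, or_false] at hv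
            rcases hv with rfl | rfl
            · exact covElt hc' rfl (by simp)
            · exact covElt hc' (by norm_num) List.mem_cons_self
        · -- t+1 = n : arrived at the antipode, wall established
          have htn' : t + 1 = n := by omega
          refine ih _ u (Or.inr (Or.inr (Or.inl ⟨hmeasW, ?_⟩)))
          intro v hv
          simp only [List.mem_cons, List.not_mem_nil, or_false] at hv
          subst hv
          refine covElt hc' ?_ (show a ∈ _ by simp)
          have h5 : ((t+1:ℕ) : ZMod (2*n)) = ((n:ℕ) : ZMod (2*n)) := by rw [htn']
          rw [hu, h5]
          rcases hs with rfl | rfl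
          · push_cast; linear_combination hnn
          · push_cast; ring
      · -- backtrack blocked
        exact absurd (covElt hc' hu
                (show a + s * ((t-1:ℕ) : ZMod (2*n)) ∈ _ by simp))
          (fun ⟨i2, hi2⟩ => hfree i2 hi2)
      · -- diagonal : wall established
        refine ih _ u (Or.inr (Or.inr (Or.inl ⟨hmeasW, ?_⟩)))
        intro v hv
        simp only [List.mem_cons, List.not_mem_nil, or_false] at hv
        subst hv
        refine covElt hc' ?_ (show a + s * ((t:ℕ) : ZMod (2*n)) ∈ _ by simp)
        rw [hu]
        rcases hs with rfl | rfl
        · push_cast; linear_combination hnn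
        · push_cast; ring
    -- ================== case S0 ==================
    · refine flyStep 0 ?_
      intro u hadj hfree
      have hc' : cov (Function.update f 0 (some r)) [r] := by
        intro v hv
        simp only [List.mem_cons, List.not_mem_nil, or_false] at hv
        subst hv
        exact ⟨0, Function.update_self (0 : Fin 6) (some v) f⟩
      have hmeasP : 2*n*n + n + 3 + (n - 1) < μ := by
        have h1 : n - 1 ≤ n := by omega
        linarith
      have hmeasW : 2*n*n + n + 2 < μ := by linarith
      rcases adj_cases0 hadj with hu | hu | hu
      · refine ih _ u (Or.inr (Or.inr (Or.inr (Or.inl ⟨1, r, 1, Or.inl rfl, le_refl 1,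
          by omega, hmeasP, by rw [hu]; push_cast; ring, ?_⟩))))
        intro v hv
        simp only [List.mem_cons, List.not_mem_nil, or_false] at hv
        rcases hv with rfl | rfl
        · exact covElt hc' rfl (by simp)
        · exact covElt hc' (by norm_num)
                (show r ∈ _ by simp)
      · refine ih _ u (Or.inr (Or.inr (Or.inr (Or.inl ⟨1, r, -1, Or.inr rfl, le_refl 1,
          by omega, hmeasP, by rw [hu]; push_cast; ring, ?_⟩))))
        intro v hv
        simp only [List.mem_cons, List.not_mem_nil, or_false] at hv
        rcases hv with rfl | rfl
        · exact covElt hc' rfl (by simp)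
        · exact covElt hc' (by norm_num)
                (show r ∈ _ by simp)
      · refine ih _ u (Or.inr (Or.inr (Or.inl ⟨hmeasW, ?_⟩)))
        intro v hv
        simp only [List.mem_cons, List.not_mem_nil, or_false] at hv
        subst hv
        exact covElt hc' (by rw [hu]; push_cast; linear_combination hnn)
                (show r ∈ _ by simp)

/-- For every `n ≥ 1`, six cops suffice to catch the robber in the
entanglement game on `DGₙ`. -/
theorem statement_3 : ∀ n : ℕ, 1 ≤ n → CopsCatch (DG n) 6 := by
  intro n hn r
  rcases Nat.lt_or_ge n 2 with h1 | h2
  · -- n = 1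
    interval_cases n
    have h2 : ∀ x y : ZMod (2*1), x ≠ y → y = x + 1 := by decide
    have h3 : ∀ x : ZMod (2*1), x + 1 + 1 = x := by decide
    refine flyStep 0 ?_
    intro u hadj hfree
    refine flyStep 1 ?_
    intro u' hadj' hfree'
    exfalso
    have hu : u = r + 1 := h2 r u hadj.ne
    have hu' : u' = u + 1 := h2 u u' hadj'.ne
    have hru : u' = r := by rw [hu', hu, h3]
    apply hfree' 0
    rw [hru]
    rw [Function.update_of_ne (by decide : (0 : Fin 6) ≠ 1)]
    simp
  · exact good_win h2 (2*n*n+2*n+4+1) _ r (Or.inr (Or.inr (Or.inr (Or.inr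
      (Nat.lt_succ_self _)))))
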